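/- For every i = 0, …, n one has the identity S'_{2i} − (φ_{2i}/α_{2i}) · S'_{2i+1} = 1 − β'₀/q. -/
import Mathlib


open Finset

/-- `S'_x` (the same formula covers both even and odd indices `x` of `ZMod (2n+2)`):
for `x = 2i` this is `S'_{2i}` and for `x = 2i+1` this is `S'_{2i+1}`. -/
noncomputable def Sp (n : ℕ) {K : Type*} [Field K] (α φ : ZMod (2*n+2) → K)
    (x : ZMod (2*n+2)) : K :=
  ∑ j ∈ range (n+1),
    (∏ k ∈ range j, (φ (x + 2*k) / α (x + 2*k)) * (φ (x + 2*k + 1) / α (x + 2*k + 1)))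
      * (1 + φ (x + 2*j) / α (x + 2*j))

lemma cast_prod_zmod (N : ℕ) [NeZero N] {K : Type*} [CommMonoid K] (f : ZMod N → K) :
    ∏ k ∈ range N, f (k : ZMod N) = ∏ z : ZMod N, f z := by
  refine Finset.prod_nbij' (fun i : ℕ => (i : ZMod N)) (fun z => z.val) ?_ ?_ ?_ ?_ ?_
  · intro a _; exact mem_univ _
  · intro z _; exact mem_range.2 (ZMod.val_lt z)
  · intro a ha; exact ZMod.val_cast_of_lt (mem_range.1 ha)
  · intro z _; exact ZMod.natCast_rightInverse z
  · intro a _; rfl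

lemma shift_prod_zmod (N : ℕ) [NeZero N] {K : Type*} [CommMonoid K] (f : ZMod N → K)
    (x : ZMod N) : ∏ k ∈ range N, f (x + (k : ZMod N)) = ∏ z : ZMod N, f z := by
  rw [cast_prod_zmod N (fun z => f (x + z))]
  exact Equiv.prod_comp (Equiv.addLeft x) f

lemma pair_prod {K : Type*} [CommMonoid K] (f : ℕ → K) (j : ℕ) :
    ∏ k ∈ range j, (f (2*k) * f (2*k+1)) = ∏ k ∈ range (2*j), f k := by
  induction j with
  | zero => simp
  | succ j ih =>
    rw [prod_range_succ, ih, Nat.mul_succ, prod_range_succ, ← mul_assoc, prod_range_succ]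

/-- `S'_{2i} - (φ_{2i}/α_{2i}) S'_{2i+1} = 1 - β'₀/q` for `i = 0, …, n`,
where `q = ∏_{i=0}^{2n+1} α_i` and `β'₀ = ∏_{i=0}^{n} φ_{2i} φ_{2i+1}`. -/
theorem stmt3 (n : ℕ) (hn : 1 ≤ n) (K : Type*) [Field K]
    (α φ : ZMod (2*n+2) → K) (hα : ∀ i, α i ≠ 0) (hφ : ∀ i, φ i ≠ 0)
    (q β'₀ : K)
    (hq : q = ∏ i ∈ range (2*n+2), α (i : ZMod (2*n+2)))
    (hβ'₀ : β'₀ = ∏ i ∈ range (n+1), φ (2*i) * φ (2*i+1)) :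
    ∀ i : ℕ, i ≤ n →
      Sp n α φ (2*i) - (φ (2*i) / α (2*i)) * Sp n α φ (2*i+1) = 1 - β'₀ / q := by
  have hNe : NeZero (2*n+2) := ⟨by omega⟩
  intro i hi
  set x : ZMod (2*n+2) := ((2*i : ℕ) : ZMod (2*n+2)) with hx
  -- the basic ratio function
  set r : ℕ → K := fun m => φ (x + (m : ZMod (2*n+2))) / α (x + (m : ZMod (2*n+2))) with hr
  -- partial products
  set g : ℕ → K := fun j => ∏ k ∈ range (2*j), r k with hg
  have hcast : ∀ m : ℕ, ((m : ℕ) : ZMod (2*n+2)) = (m : ZMod (2*n+2)) := fun m => rfl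
  -- rewrite Sp x
  have hSx : Sp n α φ x = ∑ j ∈ range (n+1), g j * (1 + r (2*j)) := by
    unfold Sp
    refine Finset.sum_congr rfl fun j _ => ?_
    have h1 : ∏ k ∈ range j,
        (φ (x + 2*(k:ZMod (2*n+2))) / α (x + 2*(k:ZMod (2*n+2)))) *
        (φ (x + 2*(k:ZMod (2*n+2)) + 1) / α (x + 2*(k:ZMod (2*n+2)) + 1))
        = ∏ k ∈ range j, r (2*k) * r (2*k+1) := by
      refine Finset.prod_congr rfl fun k _ => ?_
      simp only [hr]
      push_cast
      ring_nf
    rw [h1, pair_prod]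
    congr 2
    simp only [hr]
    push_cast
    ring_nf
  have hSx1 : Sp n α φ (x + 1) = ∑ j ∈ range (n+1),
      (∏ k ∈ range j, r (2*k+1) * r (2*k+2)) * (1 + r (2*j+1)) := by
    unfold Sp
    refine Finset.sum_congr rfl fun j _ => ?_
    have h1 : ∏ k ∈ range j,
        (φ (x + 1 + 2*(k:ZMod (2*n+2))) / α (x + 1 + 2*(k:ZMod (2*n+2)))) *
        (φ (x + 1 + 2*(k:ZMod (2*n+2)) + 1) / α (x + 1 + 2*(k:ZMod (2*n+2)) + 1))
        = ∏ k ∈ range j, r (2*k+1) * r (2*k+2) := by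
      refine Finset.prod_congr rfl fun k _ => ?_
      simp only [hr]
      push_cast
      ring_nf
    rw [h1]
    congr 2
    simp only [hr]
    push_cast
    ring_nf
  -- the telescoping identity
  have key : ∀ j : ℕ, g j * (1 + r (2*j)) -
      r 0 * ((∏ k ∈ range j, r (2*k+1) * r (2*k+2)) * (1 + r (2*j+1))) = g j - g (j+1) := by
    intro j
    have hpre : r 0 * ∏ k ∈ range j, r (2*k+1) * r (2*k+2) = g j * r (2*j) := by
      have h2 : ∏ k ∈ range j, r (2*k+1) * r (2*k+2)
          = ∏ k ∈ range (2*j), r (k+1) := pair_prod (fun m => r (m+1)) j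
      have h3 : r 0 * ∏ k ∈ range (2*j), r (k+1) = ∏ k ∈ range (2*j+1), r k := by
        rw [Finset.prod_range_succ' r (2*j)]
        exact mul_comm _ _
      rw [h2, h3, Finset.prod_range_succ]
    have hg1 : g (j+1) = g j * r (2*j) * r (2*j+1) := by
      simp only [hg, Nat.mul_succ, prod_range_succ]
    rw [← mul_assoc, hpre, hg1]
    ring
  -- combine
  have hxdef : (2*(i:ZMod (2*n+2)) : ZMod (2*n+2)) = x := by
    simp [hx]
  have hx1 : ((2*i+1 : ℕ) : ZMod (2*n+2)) = x + 1 := by simp [hx]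
  have hφα : (φ (2*(i:ZMod (2*n+2))) / α (2*(i:ZMod (2*n+2)))) = r 0 := by
    simp only [hr, hxdef]
    norm_num
  have main : Sp n α φ x - r 0 * Sp n α φ (x + 1) = g 0 - g (n+1) := by
    rw [hSx, hSx1, Finset.mul_sum, ← Finset.sum_sub_distrib]
    rw [show (∑ j ∈ range (n+1), (g j * (1 + r (2*j)) -
      r 0 * ((∏ k ∈ range j, r (2*k+1) * r (2*k+2)) * (1 + r (2*j+1)))))
      = ∑ j ∈ range (n+1), (g j - g (j+1)) from Finset.sum_congr rfl fun j _ => key j]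
    exact Finset.sum_range_sub' g (n+1)
  have hg0 : g 0 = 1 := by simp [hg]
  have hgn : g (n+1) = β'₀ / q := by
    have hprod : g (n+1) = (∏ k ∈ range (2*n+2), φ (x + (k : ZMod (2*n+2)))) /
        (∏ k ∈ range (2*n+2), α (x + (k : ZMod (2*n+2)))) := by
      simp only [hg, hr, show 2*(n+1) = 2*n+2 from by ring]
      rw [Finset.prod_div_distrib]
    have hφall : ∏ k ∈ range (2*n+2), φ (x + (k : ZMod (2*n+2))) = β'₀ := by
      rw [shift_prod_zmod, hβ'₀]
      have := pair_prod (K := K) (fun m => φ ((m : ℕ) : ZMod (2*n+2))) (n+1)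
      rw [show 2*(n+1) = 2*n+2 from by ring] at this
      rw [← cast_prod_zmod (2*n+2) φ, ← this]
      refine Finset.prod_congr rfl fun k _ => ?_
      push_cast
      ring_nf
    have hαall : ∏ k ∈ range (2*n+2), α (x + (k : ZMod (2*n+2))) = q := by
      rw [shift_prod_zmod, hq, cast_prod_zmod]
    rw [hprod, hφall, hαall]
  rw [hφα, hxdef, main, hg0, hgn]
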